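/- Let n ≥ 3, let λ, ν ∈ ℂ with ν − λ a nonnegative integer, and let 1 ≤ p, q ≤ n−1 with p ≠ q. Then (x_p x_q)·𝒦_{λ−1,ν+1} = 4 ∂_p ∂_q 𝒦_{λ+1,ν−1} as tempered distributions on ℝ^n. -/

import Mathlib

/-- Partial derivative ∂_p of a complex-valued function on ℝ^n. -/
noncomputable def pd {n : ℕ} (p : Fin n) (f : (Fin n → ℝ) → ℂ) : (Fin n → ℝ) → ℂ :=
  fun x => fderiv ℝ f x (Pi.single p 1)

/-- Δ' = ∂_1² + ⋯ + ∂_{n−1}², the Laplacian in the first n−1 variables on ℝ^n. -/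
noncomputable def lapP {n : ℕ} (f : (Fin n → ℝ) → ℂ) : (Fin n → ℝ) → ℂ :=
  fun x => ∑ j ∈ Finset.univ.filter (fun j : Fin n => (j : ℕ) < n - 1), pd j (pd j f) x

/-- ∂_n, the partial derivative in the last variable on ℝ^n. -/
noncomputable def pdLast {n : ℕ} (f : (Fin n → ℝ) → ℂ) : (Fin n → ℝ) → ℂ :=
  if h : 0 < n then pd ⟨n - 1, by omega⟩ f else 0

/-- The coefficient of z^{l−2k} in the renormalized Gegenbauer polynomial
C̃_l^α(z) = Σ_{k=0}^{⌊l/2⌋} (−1)^k (∏_{m=⌊(l+1)/2⌋}^{l−k−1}(α+m)) (2z)^{l−2k}/(k!(l−2k)!). -/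
noncomputable def gegenCoeff (α : ℂ) (l k : ℕ) : ℂ :=
  (-1 : ℂ) ^ k * (∏ m ∈ Finset.Ico ((l + 1) / 2) (l - k), (α + (m : ℂ))) *
    2 ^ (l - 2 * k) / ((Nat.factorial k : ℂ) * (Nat.factorial (l - 2 * k) : ℂ))

/-- The action on a test function `φ` of the tempered distribution
`𝒦_{λ,ν} = Σ_{k=0}^{⌊l/2⌋} a_k (−1)^k (Δ')^k ∂_n^{l−2k} δ` on ℝ^n, where `l = ν − λ`
and `a_k` are the coefficients of `C̃_l^{λ−(n−1)/2}`; each `∂` contributes a sign `−1`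
and δ evaluates at 0.  By convention `𝒦_{λ,ν} = 0` when `l < 0`. -/
noncomputable def Kact (n : ℕ) (lam : ℂ) (l : ℤ) (φ : (Fin n → ℝ) → ℂ) : ℂ :=
  if 0 ≤ l then
    ∑ k ∈ Finset.range (l.toNat / 2 + 1),
      gegenCoeff (lam - ((n : ℂ) - 1) / 2) l.toNat k *
        ((-1 : ℂ) ^ k * ((-1 : ℂ) ^ (l.toNat - 2 * k) *
          (pdLast (n := n))^[l.toNat - 2 * k] ((lapP (n := n))^[k] φ) 0))
  else 0

/-- γ(μ, a) := 1 if a is odd, μ + a/2 if a is even. -/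
noncomputable def gam (mu : ℂ) (a : ℕ) : ℂ := if a % 2 = 1 then 1 else mu + ((a / 2 : ℕ) : ℂ)

open scoped ContDiff

namespace Stmt13Aux
variable {n : ℕ}

noncomputable def cCLM (i : Fin n) : (Fin n → ℝ) →L[ℝ] ℂ :=
  Complex.ofRealCLM.comp (ContinuousLinearMap.proj i)

lemma contDiff_coord (i : Fin n) :
    ContDiff ℝ (∞ : WithTop ℕ∞) (fun x : Fin n → ℝ => ((x i : ℝ) : ℂ)) :=
  (cCLM i).contDiff

lemma pd_smooth (j : Fin n) {f : (Fin n → ℝ) → ℂ} (hf : ContDiff ℝ (∞ : WithTop ℕ∞) f) :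
    ContDiff ℝ (∞ : WithTop ℕ∞) (pd j f) :=
  (hf.fderiv_right (m := ∞) (by norm_cast)).clm_apply contDiff_const

lemma pd_add (j : Fin n) {f g : (Fin n → ℝ) → ℂ} (hf : ContDiff ℝ (∞ : WithTop ℕ∞) f)
    (hg : ContDiff ℝ (∞ : WithTop ℕ∞) g) :
    pd j (fun x => f x + g x) = fun x => pd j f x + pd j g x := by
  funext x
  simp only [pd]
  rw [fderiv_fun_add ((hf.differentiable (by norm_cast)) x) ((hg.differentiable (by norm_cast)) x)]
  rfl

lemma pd_const_mul (j : Fin n) (c : ℂ) {f : (Fin n → ℝ) → ℂ}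
    (hf : ContDiff ℝ (∞ : WithTop ℕ∞) f) :
    pd j (fun x => c * f x) = fun x => c * pd j f x := by
  funext x
  simp only [pd]
  rw [fderiv_const_mul ((hf.differentiable (by norm_cast)) x)]
  rfl

lemma pd_coord_mul (i j : Fin n) {f : (Fin n → ℝ) → ℂ}
    (hf : ContDiff ℝ (∞ : WithTop ℕ∞) f) :
    pd j (fun x => ((x i : ℝ) : ℂ) * f x)
      = fun x => (((Pi.single j 1 : Fin n → ℝ) i : ℝ) : ℂ) * f x
          + ((x i : ℝ) : ℂ) * pd j f x := by
  funext x
  simp only [pd]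
  have hc : DifferentiableAt ℝ (fun x : Fin n → ℝ => ((x i : ℝ) : ℂ)) x :=
    (cCLM i).differentiableAt
  rw [fderiv_fun_mul hc ((hf.differentiable (by norm_cast)) x)]
  have hfc : fderiv ℝ (fun x : Fin n → ℝ => ((x i : ℝ) : ℂ)) x = cCLM i :=
    (cCLM i).fderiv
  simp [hfc, cCLM]
  ring

lemma pd_eval_clm (v : Fin n → ℝ) (j : Fin n) {f : (Fin n → ℝ) → ℂ}
    (hf : ContDiff ℝ (∞ : WithTop ℕ∞) f) (x : Fin n → ℝ) :
    fderiv ℝ (fun y => fderiv ℝ f y v) x (Pi.single j 1)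
      = fderiv ℝ (fderiv ℝ f) x (Pi.single j 1) v := by
  have hdf : DifferentiableAt ℝ (fderiv ℝ f) x :=
    ((hf.fderiv_right (m := ∞) (by norm_cast)).differentiable (by norm_cast)) x
  rw [fderiv_clm_apply hdf (differentiableAt_const v)]
  simp [ContinuousLinearMap.flip_apply]

lemma pd_comm (i j : Fin n) {f : (Fin n → ℝ) → ℂ}
    (hf : ContDiff ℝ (∞ : WithTop ℕ∞) f) :
    pd i (pd j f) = pd j (pd i f) := by
  funext x
  have hsymm : IsSymmSndFDerivAt ℝ f x :=
    hf.contDiffAt.isSymmSndFDerivAt (by simp only [minSmoothness_of_isRCLikeNormedField]; exact WithTop.coe_le_coe.mpr le_top)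
  unfold pd
  rw [pd_eval_clm _ _ hf, pd_eval_clm _ _ hf]
  exact hsymm _ _

lemma pd_sum (j : Fin n) {ι : Type*} (s : Finset ι) (F : ι → (Fin n → ℝ) → ℂ)
    (hF : ∀ i ∈ s, ContDiff ℝ (∞ : WithTop ℕ∞) (F i)) :
    pd j (fun x => ∑ i ∈ s, F i x) = fun x => ∑ i ∈ s, pd j (F i) x := by
  funext x
  simp only [pd]
  rw [fderiv_fun_sum (fun i hi => ((hF i hi).differentiable (by norm_cast)) x)]
  simp

lemma lapP_smooth {f : (Fin n → ℝ) → ℂ} (hf : ContDiff ℝ (∞ : WithTop ℕ∞) f) :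
    ContDiff ℝ (∞ : WithTop ℕ∞) (lapP f) := by
  unfold lapP
  exact ContDiff.sum (fun j _ => pd_smooth j (pd_smooth j hf))

lemma lapP_add {f g : (Fin n → ℝ) → ℂ} (hf : ContDiff ℝ (∞ : WithTop ℕ∞) f)
    (hg : ContDiff ℝ (∞ : WithTop ℕ∞) g) :
    lapP (fun x => f x + g x) = fun x => lapP f x + lapP g x := by
  funext x
  unfold lapP
  rw [← Finset.sum_add_distrib]
  apply Finset.sum_congr rfl
  intro j _
  rw [pd_add j hf hg, pd_add j (pd_smooth j hf) (pd_smooth j hg)]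

lemma lapP_const_mul (c : ℂ) {f : (Fin n → ℝ) → ℂ}
    (hf : ContDiff ℝ (∞ : WithTop ℕ∞) f) :
    lapP (fun x => c * f x) = fun x => c * lapP f x := by
  funext x
  unfold lapP
  rw [Finset.mul_sum]
  apply Finset.sum_congr rfl
  intro j _
  rw [pd_const_mul j c hf, pd_const_mul j c (pd_smooth j hf)]

lemma pd_lapP (i : Fin n) {f : (Fin n → ℝ) → ℂ} (hf : ContDiff ℝ (∞ : WithTop ℕ∞) f) :
    pd i (lapP f) = lapP (pd i f) := by
  unfold lapP
  rw [pd_sum i _ _ (fun j _ => pd_smooth j (pd_smooth j hf))]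
  funext x
  apply Finset.sum_congr rfl
  intro j _
  rw [pd_comm i j (pd_smooth j hf), pd_comm i j hf]

lemma lapP_coord_mul {i : Fin n} (hi : (i : ℕ) < n - 1) {f : (Fin n → ℝ) → ℂ}
    (hf : ContDiff ℝ (∞ : WithTop ℕ∞) f) :
    lapP (fun x => ((x i : ℝ) : ℂ) * f x)
      = fun x => ((x i : ℝ) : ℂ) * lapP f x + 2 * pd i f x := by
  funext x
  unfold lapP
  have key : ∀ j : Fin n, pd j (pd j (fun x => ((x i : ℝ) : ℂ) * f x))
      = fun x => 2 * (((Pi.single j 1 : Fin n → ℝ) i : ℝ) : ℂ) * pd j f x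
          + ((x i : ℝ) : ℂ) * pd j (pd j f) x := by
    intro j
    rw [pd_coord_mul i j hf,
      pd_add j (contDiff_const.mul hf) ((contDiff_coord i).mul (pd_smooth j hf)),
      pd_const_mul j _ hf, pd_coord_mul i j (pd_smooth j hf)]
    funext y
    ring
  simp only [key]
  rw [Finset.sum_add_distrib, ← Finset.mul_sum]
  have : ∀ j : Fin n,
      2 * (((Pi.single j 1 : Fin n → ℝ) i : ℝ) : ℂ) * pd j f x
        = if i = j then 2 * pd j f x else 0 := by
    intro j
    rw [Pi.single_apply]
    split <;> simp
  simp only [this]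
  rw [Finset.sum_ite_eq]
  simp only [Finset.mem_filter, Finset.mem_univ, true_and, hi, if_true]
  ring


lemma lapP_iter_smooth (k : ℕ) {f : (Fin n → ℝ) → ℂ}
    (hf : ContDiff ℝ (∞ : WithTop ℕ∞) f) :
    ContDiff ℝ (∞ : WithTop ℕ∞) ((lapP (n := n))^[k] f) := by
  induction k with
  | zero => exact hf
  | succ m ih => rw [Function.iterate_succ_apply']; exact lapP_smooth ih

lemma lapP_iter_add (k : ℕ) {f g : (Fin n → ℝ) → ℂ}
    (hf : ContDiff ℝ (∞ : WithTop ℕ∞) f) (hg : ContDiff ℝ (∞ : WithTop ℕ∞) g) :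
    (lapP (n := n))^[k] (fun x => f x + g x)
      = fun x => (lapP (n := n))^[k] f x + (lapP (n := n))^[k] g x := by
  induction k with
  | zero => rfl
  | succ m ih =>
    rw [Function.iterate_succ_apply', ih,
      lapP_add (lapP_iter_smooth m hf) (lapP_iter_smooth m hg),
      Function.iterate_succ_apply', Function.iterate_succ_apply']

lemma lapP_iter_const_mul (k : ℕ) (c : ℂ) {f : (Fin n → ℝ) → ℂ}
    (hf : ContDiff ℝ (∞ : WithTop ℕ∞) f) :
    (lapP (n := n))^[k] (fun x => c * f x)
      = fun x => c * (lapP (n := n))^[k] f x := by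
  induction k with
  | zero => rfl
  | succ m ih =>
    rw [Function.iterate_succ_apply', ih, lapP_const_mul c (lapP_iter_smooth m hf),
      Function.iterate_succ_apply']

lemma pd_lapP_iter (i : Fin n) (k : ℕ) {f : (Fin n → ℝ) → ℂ}
    (hf : ContDiff ℝ (∞ : WithTop ℕ∞) f) :
    pd i ((lapP (n := n))^[k] f) = (lapP (n := n))^[k] (pd i f) := by
  induction k with
  | zero => rfl
  | succ m ih =>
    rw [Function.iterate_succ_apply', pd_lapP i (lapP_iter_smooth m hf), ih,
      Function.iterate_succ_apply']

lemma lapP_iter_coord_mul {i : Fin n} (hi : (i : ℕ) < n - 1) (k : ℕ)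
    {f : (Fin n → ℝ) → ℂ} (hf : ContDiff ℝ (∞ : WithTop ℕ∞) f) :
    (lapP (n := n))^[k] (fun x => ((x i : ℝ) : ℂ) * f x)
      = fun x => ((x i : ℝ) : ℂ) * (lapP (n := n))^[k] f x
          + (2 * (k : ℂ)) * (lapP (n := n))^[k - 1] (pd i f) x := by
  induction k generalizing f with
  | zero => funext x; simp
  | succ m ih =>
    rw [Function.iterate_succ_apply, lapP_coord_mul hi hf,
      lapP_iter_add m ((contDiff_coord i).mul (lapP_smooth hf))
        (contDiff_const.mul (pd_smooth i hf)),
      ih (lapP_smooth hf), lapP_iter_const_mul m 2 (pd_smooth i hf)]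
    funext x
    simp only
    rw [← Function.iterate_succ_apply lapP m f, pd_lapP i hf]
    cases m with
    | zero =>
      simp only [Function.iterate_zero, id_eq, Nat.zero_sub, Nat.add_sub_cancel]
      push_cast
      ring
    | succ m' =>
      rw [Nat.add_sub_cancel, Nat.add_sub_cancel,
        ← Function.iterate_succ_apply lapP m' (pd i f)]
      push_cast
      ring

lemma pdLast_eq (hn : 0 < n) (f : (Fin n → ℝ) → ℂ) :
    pdLast (n := n) f = pd ⟨n - 1, by omega⟩ f := by
  simp [pdLast, hn]

lemma pdLast_smooth (hn : 0 < n) {f : (Fin n → ℝ) → ℂ}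
    (hf : ContDiff ℝ (∞ : WithTop ℕ∞) f) :
    ContDiff ℝ (∞ : WithTop ℕ∞) (pdLast (n := n) f) := by
  rw [pdLast_eq hn]
  exact pd_smooth _ hf

lemma pdLast_iter_smooth (hn : 0 < n) (a : ℕ) {f : (Fin n → ℝ) → ℂ}
    (hf : ContDiff ℝ (∞ : WithTop ℕ∞) f) :
    ContDiff ℝ (∞ : WithTop ℕ∞) ((pdLast (n := n))^[a] f) := by
  induction a with
  | zero => exact hf
  | succ m ih => rw [Function.iterate_succ_apply']; exact pdLast_smooth hn ih

lemma pdLast_iter_add (hn : 0 < n) (a : ℕ) {f g : (Fin n → ℝ) → ℂ}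
    (hf : ContDiff ℝ (∞ : WithTop ℕ∞) f) (hg : ContDiff ℝ (∞ : WithTop ℕ∞) g) :
    (pdLast (n := n))^[a] (fun x => f x + g x)
      = fun x => (pdLast (n := n))^[a] f x + (pdLast (n := n))^[a] g x := by
  induction a with
  | zero => rfl
  | succ m ih =>
    rw [Function.iterate_succ_apply', ih, pdLast_eq hn,
      pd_add _ (pdLast_iter_smooth hn m hf) (pdLast_iter_smooth hn m hg)]
    funext x
    rw [Function.iterate_succ_apply' pdLast m f, Function.iterate_succ_apply' pdLast m g,
      pdLast_eq hn ((pdLast (n := n))^[m] f), pdLast_eq hn ((pdLast (n := n))^[m] g)]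

lemma pdLast_iter_const_mul (hn : 0 < n) (a : ℕ) (c : ℂ) {f : (Fin n → ℝ) → ℂ}
    (hf : ContDiff ℝ (∞ : WithTop ℕ∞) f) :
    (pdLast (n := n))^[a] (fun x => c * f x)
      = fun x => c * (pdLast (n := n))^[a] f x := by
  induction a with
  | zero => rfl
  | succ m ih =>
    rw [Function.iterate_succ_apply', ih, pdLast_eq hn,
      pd_const_mul _ c (pdLast_iter_smooth hn m hf)]
    funext x
    rw [Function.iterate_succ_apply' pdLast m f, pdLast_eq hn ((pdLast (n := n))^[m] f)]

lemma pdLast_coord_mul {i : Fin n} (hi : (i : ℕ) < n - 1) {f : (Fin n → ℝ) → ℂ}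
    (hf : ContDiff ℝ (∞ : WithTop ℕ∞) f) :
    pdLast (n := n) (fun x => ((x i : ℝ) : ℂ) * f x)
      = fun x => ((x i : ℝ) : ℂ) * pdLast (n := n) f x := by
  have hn : 0 < n := by omega
  rw [pdLast_eq hn, pdLast_eq hn, pd_coord_mul i _ hf]
  funext x
  rw [Pi.single_apply]
  have : ¬ (i = (⟨n - 1, by omega⟩ : Fin n)) := by
    intro h
    have := congrArg Fin.val h
    simp at this
    omega
  simp [this]

lemma pdLast_iter_coord_mul {i : Fin n} (hi : (i : ℕ) < n - 1) (a : ℕ)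
    {f : (Fin n → ℝ) → ℂ} (hf : ContDiff ℝ (∞ : WithTop ℕ∞) f) :
    (pdLast (n := n))^[a] (fun x => ((x i : ℝ) : ℂ) * f x)
      = fun x => ((x i : ℝ) : ℂ) * (pdLast (n := n))^[a] f x := by
  have hn : 0 < n := by omega
  induction a with
  | zero => rfl
  | succ m ih =>
    rw [Function.iterate_succ_apply', ih,
      pdLast_coord_mul hi (pdLast_iter_smooth hn m hf),
      Function.iterate_succ_apply']

lemma pdLast_iter_coord_zero {i : Fin n} (hi : (i : ℕ) < n - 1) (a : ℕ)
    {f : (Fin n → ℝ) → ℂ} (hf : ContDiff ℝ (∞ : WithTop ℕ∞) f) :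
    (pdLast (n := n))^[a] (fun x => ((x i : ℝ) : ℂ) * f x) 0 = 0 := by
  rw [pdLast_iter_coord_mul hi a hf]
  simp

lemma eval_key {p q : Fin n} (hp : (p : ℕ) < n - 1) (hq : (q : ℕ) < n - 1) (hpq : p ≠ q)
    {f : (Fin n → ℝ) → ℂ} (hf : ContDiff ℝ (∞ : WithTop ℕ∞) f) (k a : ℕ) :
    (pdLast (n := n))^[a]
        ((lapP (n := n))^[k] (fun x => ((x p : ℝ) : ℂ) * (((x q : ℝ) : ℂ) * f x))) 0
      = (2 * (k : ℂ)) * (2 * ((k - 1 : ℕ) : ℂ)) *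
          (pdLast (n := n))^[a] ((lapP (n := n))^[k - 1 - 1] (pd q (pd p f))) 0 := by
  have hn : 0 < n := by omega
  have hMq : ContDiff ℝ (∞ : WithTop ℕ∞) (fun x : Fin n → ℝ => ((x q : ℝ) : ℂ) * f x) :=
    (contDiff_coord q).mul hf
  rw [lapP_iter_coord_mul hp k hMq]
  have e1 : (lapP (n := n))^[k] (fun x => ((x q : ℝ) : ℂ) * f x)
      = fun x => ((x q : ℝ) : ℂ) * (lapP (n := n))^[k] f x
          + (2 * (k : ℂ)) * (lapP (n := n))^[k - 1] (pd q f) x :=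
    lapP_iter_coord_mul hq k hf
  have e2 : pd p (fun x => ((x q : ℝ) : ℂ) * f x)
      = fun x => ((x q : ℝ) : ℂ) * pd p f x := by
    rw [pd_coord_mul q p hf]
    funext x
    rw [Pi.single_apply]
    have hqp : ¬ (q = p) := fun h => hpq h.symm
    simp [hqp]
  have e3 : (lapP (n := n))^[k - 1] (fun x => ((x q : ℝ) : ℂ) * pd p f x)
      = fun x => ((x q : ℝ) : ℂ) * (lapP (n := n))^[k - 1] (pd p f) x
          + (2 * ((k - 1 : ℕ) : ℂ)) * (lapP (n := n))^[k - 1 - 1] (pd q (pd p f)) x :=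
    lapP_iter_coord_mul hq (k - 1) (pd_smooth p hf)
  simp only [e1, e2, e3]
  -- now the function is a sum of four pieces
  have hG1 : ContDiff ℝ (∞ : WithTop ℕ∞)
      (fun x : Fin n → ℝ => ((x p : ℝ) : ℂ) *
        (((x q : ℝ) : ℂ) * (lapP (n := n))^[k] f x
          + (2 * (k : ℂ)) * (lapP (n := n))^[k - 1] (pd q f) x)) :=
    (contDiff_coord p).mul (((contDiff_coord q).mul (lapP_iter_smooth k hf)).add
      (contDiff_const.mul (lapP_iter_smooth (k - 1) (pd_smooth q hf))))
  have hB : ContDiff ℝ (∞ : WithTop ℕ∞)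
      (fun x : Fin n → ℝ => ((x q : ℝ) : ℂ) * (lapP (n := n))^[k - 1] (pd p f) x
          + (2 * ((k - 1 : ℕ) : ℂ)) * (lapP (n := n))^[k - 1 - 1] (pd q (pd p f)) x) :=
    ((contDiff_coord q).mul (lapP_iter_smooth (k - 1) (pd_smooth p hf))).add
      (contDiff_const.mul (lapP_iter_smooth (k - 1 - 1) (pd_smooth q (pd_smooth p hf))))
  rw [pdLast_iter_add hn a hG1 (contDiff_const.mul hB)]
  simp only [Pi.add_apply]
  rw [pdLast_iter_coord_zero hp a (((contDiff_coord q).mul (lapP_iter_smooth k hf)).add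
      (contDiff_const.mul (lapP_iter_smooth (k - 1) (pd_smooth q hf)))),
    pdLast_iter_const_mul hn a _ hB]
  simp only [zero_add]
  rw [pdLast_iter_add hn a ((contDiff_coord q).mul (lapP_iter_smooth (k - 1) (pd_smooth p hf)))
      (contDiff_const.mul (lapP_iter_smooth (k - 1 - 1) (pd_smooth q (pd_smooth p hf))))]
  rw [show ((0 : Fin n → ℝ)) = (0 : Fin n → ℝ) from rfl]
  have z1 : (pdLast (n := n))^[a]
      (fun x => ((x q : ℝ) : ℂ) * (lapP (n := n))^[k - 1] (pd p f) x) 0 = 0 :=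
    pdLast_iter_coord_zero hq a (lapP_iter_smooth (k - 1) (pd_smooth p hf))
  rw [pdLast_iter_const_mul hn a _
    (lapP_iter_smooth (k - 1 - 1) (pd_smooth q (pd_smooth p hf)))]
  simp only [z1, zero_add]
  ring

lemma coeff_key (α : ℂ) (t j : ℕ) (h : 2 * j + 2 ≤ t) :
    ((j : ℂ) + 2) * ((j : ℂ) + 1) * gegenCoeff (α - 1) (t + 2) (j + 2)
      = gegenCoeff (α + 1) (t - 2) j := by
  unfold gegenCoeff
  have h1 : (t + 2) - 2 * (j + 2) = t - 2 - 2 * j := by omega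
  have h2 : (t + 2) - (j + 2) = t - j := by omega
  have h3 : (t + 2 + 1) / 2 = (t - 1) / 2 + 2 := by omega
  have h4 : (t - 2 + 1) / 2 = (t - 1) / 2 := by omega
  rw [h1, h2, h3, h4]
  have hprod : (∏ m ∈ Finset.Ico ((t - 1) / 2 + 2) (t - j), (α - 1 + (m : ℂ)))
      = ∏ m ∈ Finset.Ico ((t - 1) / 2) (t - 2 - j), (α + 1 + (m : ℂ)) := by
    rw [Finset.prod_Ico_eq_prod_range, Finset.prod_Ico_eq_prod_range]
    have h5 : (t - j) - ((t - 1) / 2 + 2) = (t - 2 - j) - (t - 1) / 2 := by omega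
    rw [h5]
    apply Finset.prod_congr rfl
    intro i _
    push_cast
    ring
  rw [hprod]
  have hfac : ((Nat.factorial (j + 2) : ℂ)) = ((j : ℂ) + 2) * ((j : ℂ) + 1) * (Nat.factorial j : ℂ) := by
    show ((Nat.factorial (j + 1 + 1) : ℂ)) = _
    rw [Nat.factorial_succ, Nat.factorial_succ]
    push_cast
    ring
  rw [hfac]
  have hsign : (-1 : ℂ) ^ (j + 2) = (-1 : ℂ) ^ j := by rw [pow_add]; norm_num
  rw [hsign]
  have hj0 : (Nat.factorial j : ℂ) ≠ 0 := by exact_mod_cast (Nat.factorial_pos j).ne'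
  have he0 : (Nat.factorial (t - 2 - 2 * j) : ℂ) ≠ 0 := by
    exact_mod_cast (Nat.factorial_pos _).ne'
  have hj2 : ((j : ℂ) + 2) ≠ 0 := by
    have : ((j : ℂ) + 2) = ((j + 2 : ℕ) : ℂ) := by push_cast; ring
    rw [this]
    exact_mod_cast Nat.succ_ne_zero (j + 1)
  have hj1 : ((j : ℂ) + 1) ≠ 0 := by
    have : ((j : ℂ) + 1) = ((j + 1 : ℕ) : ℂ) := by push_cast; ring
    rw [this]
    exact_mod_cast Nat.succ_ne_zero j
  field_simp

end Stmt13Aux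
open Stmt13Aux Stmt13Aux


/-- `(x_p x_q)·𝒦_{λ−1,ν+1} = 4 ∂_p ∂_q 𝒦_{λ+1,ν−1}` as tempered distributions on ℝ^n,
tested against an arbitrary Schwartz function `φ`; `(∂_p ∂_q T)(φ) = T(∂_q ∂_p φ)`. -/
theorem stmt13 (n : ℕ) (hn : 3 ≤ n) (lam nu : ℂ) (l : ℤ) (hl : 0 ≤ l)
    (hln : nu - lam = (l : ℂ)) (p q : Fin n) (hp : (p : ℕ) < n - 1) (hq : (q : ℕ) < n - 1)
    (hpq : p ≠ q) (φ : SchwartzMap (Fin n → ℝ) ℂ) :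
    Kact n (lam - 1) (l + 2) (fun x => ((x p * x q : ℝ) : ℂ) * φ x)
      = 4 * Kact n (lam + 1) (l - 2) (pd q (pd p ⇑φ)) := by
  classical
  have hsm : ContDiff ℝ (∞ : WithTop ℕ∞) (⇑φ) := φ.smooth ⊤
  set t : ℕ := l.toNat with htdef
  have htl : l = (t : ℤ) := by omega
  set β : ℂ := lam - ((n : ℂ) - 1) / 2 with hβdef
  have hβ1 : lam - 1 - ((n : ℂ) - 1) / 2 = β - 1 := by rw [hβdef]; ring
  have hβ2 : lam + 1 - ((n : ℂ) - 1) / 2 = β + 1 := by rw [hβdef]; ring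
  have hfun : (fun x : Fin n → ℝ => ((x p * x q : ℝ) : ℂ) * φ x)
      = fun x : Fin n → ℝ => ((x p : ℝ) : ℂ) * (((x q : ℝ) : ℂ) * φ x) := by
    funext x
    push_cast
    ring
  have htn2 : (l + 2).toNat = t + 2 := by omega
  have hrange : (t + 2) / 2 + 1 = t / 2 + 2 := by omega
  rw [Kact, if_pos (by omega : (0:ℤ) ≤ l + 2), hfun, htn2, hβ1, hrange]
  have hterm : ∀ k ∈ Finset.range (t / 2 + 2),
      gegenCoeff (β - 1) (t + 2) k *
        ((-1 : ℂ) ^ k * ((-1 : ℂ) ^ (t + 2 - 2 * k) *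
          (pdLast (n := n))^[t + 2 - 2 * k]
            ((lapP (n := n))^[k] (fun x => ((x p : ℝ) : ℂ) * (((x q : ℝ) : ℂ) * φ x))) 0))
      = gegenCoeff (β - 1) (t + 2) k *
        ((-1 : ℂ) ^ k * ((-1 : ℂ) ^ (t + 2 - 2 * k) *
          ((2 * (k : ℂ)) * (2 * ((k - 1 : ℕ) : ℂ)) *
            (pdLast (n := n))^[t + 2 - 2 * k]
              ((lapP (n := n))^[k - 1 - 1] (pd q (pd p ⇑φ))) 0))) := by
    intro k _
    rw [Stmt13Aux.eval_key hp hq hpq hsm k (t + 2 - 2 * k)]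
  rw [Finset.sum_congr rfl hterm]
  by_cases hlt : l < 2
  · have ht01 : t / 2 + 2 = 2 := by omega
    rw [ht01, Kact, if_neg (by omega : ¬ (0:ℤ) ≤ l - 2)]
    rw [Finset.sum_range_succ, Finset.sum_range_one]
    norm_num
  · -- l ≥ 2
    have hl2 : (0:ℤ) ≤ l - 2 := by omega
    have ht2 : 2 ≤ t := by omega
    have htn3 : (l - 2).toNat = t - 2 := by omega
    have hrange2 : (t - 2) / 2 + 1 = t / 2 := by omega
    rw [Kact, if_pos hl2, htn3, hβ2, hrange2, Finset.mul_sum]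
    rw [Finset.sum_range_succ', Finset.sum_range_succ']
    have hz0 : ∀ m, (2 * ((0:ℕ) : ℂ)) * (2 * (((0:ℕ) - 1 : ℕ) : ℂ)) * m = 0 := by
      intro m; norm_num
    have hz1 : (((1:ℕ) - 1 : ℕ) : ℂ) = 0 := by norm_num
    simp only [Nat.cast_zero, Nat.cast_one, hz1, mul_zero, zero_mul, add_zero]
    norm_num
    apply Finset.sum_congr rfl
    intro i hi
    have hib : i < t / 2 := Finset.mem_range.mp hi
    rw [show i + 1 + 1 = i + 2 from rfl]
    rw [show t + 2 - 2 * (i + 2) = t - 2 - 2 * i from by omega]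
    have hc := Stmt13Aux.coeff_key β t i (by omega)
    have hsign : (-1 : ℂ) ^ (i + 2) = (-1 : ℂ) ^ i := by rw [pow_add]; norm_num
    rw [hsign]
    linear_combination (4 * (-1 : ℂ) ^ i * (-1 : ℂ) ^ (t - 2 - 2 * i) *
      (pdLast (n := n))^[t - 2 - 2 * i] ((lapP (n := n))^[i] (pd q (pd p ⇑φ))) 0) * hc
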